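/- There exists a universal constant K > 0 such that for all positive integers n, l, all M > 0, and every matrix X ∈ ℝ^{n×l} whose columns each have Euclidean norm √n: E sup_{θ ∈ Θ} |ε⃗ᵀ X θ| ≤ K · √(n · log(l+1)) · M, where Θ := {θ ∈ ℝˡ : ‖θ‖₁ ≤ M} and ε⃗ = (ε₁,…,εₙ). -/

import Mathlib

open MeasureTheory ProbabilityTheory Real ENNReal

section aux

variable {Ω : Type} [MeasurableSpace Ω] {μ : Measure Ω} [IsProbabilityMeasure μ]

lemma two_point_ae (e : Ω → ℝ) (he : Measurable e)
    (h1 : μ {ω | e ω = 1} = ENNReal.ofReal (1/2))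
    (h2 : μ {ω | e ω = -1} = ENNReal.ofReal (1/2)) :
    ∀ᵐ ω ∂μ, e ω = 1 ∨ e ω = -1 := by
  have hA : MeasurableSet {ω | e ω = 1} := he (measurableSet_singleton 1)
  have hB : MeasurableSet {ω | e ω = -1} := he (measurableSet_singleton (-1))
  have hd : Disjoint {ω | e ω = 1} {ω | e ω = -1} := by
    rw [Set.disjoint_left]
    rintro ω hω1 hω2
    simp only [Set.mem_setOf_eq] at hω1 hω2
    rw [hω1] at hω2; norm_num at hω2
  have hu : μ ({ω | e ω = 1} ∪ {ω | e ω = -1}) = 1 := by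
    rw [measure_union hd hB, h1, h2, ← ENNReal.ofReal_add (by norm_num) (by norm_num)]
    norm_num
  have hc : μ ({ω | e ω = 1} ∪ {ω | e ω = -1})ᶜ = 0 := by
    rw [measure_compl (hA.union hB) (measure_ne_top _ _), hu, measure_univ]
    simp
  rw [ae_iff]
  have hset : {a | ¬(e a = 1 ∨ e a = -1)} = ({ω | e ω = 1} ∪ {ω | e ω = -1})ᶜ := by
    ext ω; simp [not_or]
  rw [hset]; exact hc

lemma two_point_integral (e : Ω → ℝ) (he : Measurable e)
    (h1 : μ {ω | e ω = 1} = ENNReal.ofReal (1/2))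
    (h2 : μ {ω | e ω = -1} = ENNReal.ofReal (1/2)) (g : ℝ → ℝ) :
    ∫ ω, g (e ω) ∂μ = (g 1 + g (-1)) / 2 := by
  have hA : MeasurableSet {ω | e ω = 1} := he (measurableSet_singleton 1)
  have hB : MeasurableSet {ω | e ω = -1} := he (measurableSet_singleton (-1))
  have hae := two_point_ae e he h1 h2
  have hcong : (fun ω => g (e ω)) =ᵐ[μ] fun ω =>
      Set.indicator {ω | e ω = 1} (fun _ => g 1) ω
      + Set.indicator {ω | e ω = -1} (fun _ => g (-1)) ω := by
    filter_upwards [hae] with ω hω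
    rcases hω with h | h
    · have hmem : ω ∈ {ω | e ω = 1} := h
      have hnot : ω ∉ {ω | e ω = -1} := by simp only [Set.mem_setOf_eq, h]; norm_num
      rw [Set.indicator_of_mem hmem, Set.indicator_of_notMem hnot, add_zero, h]
    · have hmem : ω ∈ {ω | e ω = -1} := h
      have hnot : ω ∉ {ω | e ω = 1} := by simp only [Set.mem_setOf_eq, h]; norm_num
      rw [Set.indicator_of_mem hmem, Set.indicator_of_notMem hnot, zero_add, h]
  rw [integral_congr_ae hcong, integral_add ((integrable_const _).indicator hA)
    ((integrable_const _).indicator hB), integral_indicator_const _ hA,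
    integral_indicator_const _ hB, measureReal_def, measureReal_def, h1, h2]
  rw [ENNReal.toReal_ofReal (by norm_num)]
  simp only [smul_eq_mul]
  ring

end aux

theorem rademacher_linear_example :
    ∃ K : ℝ, 0 < K ∧
      ∀ (n l : ℕ), 0 < n → 0 < l →
      ∀ (M : ℝ), 0 < M →
      ∀ (X : Matrix (Fin n) (Fin l) ℝ),
        -- normalization: all columns have Euclidean norm `√n`
        (∀ j, ∑ i, (X i j)^2 = n) →
      ∀ (Ω : Type) (mΩ : MeasurableSpace Ω) (μ : Measure Ω), IsProbabilityMeasure μ →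
      ∀ (ε : Fin n → Ω → ℝ),
        (∀ i, Measurable (ε i)) →
        (∀ i, μ {ω | ε i ω = 1} = ENNReal.ofReal (1/2) ∧
              μ {ω | ε i ω = -1} = ENNReal.ofReal (1/2)) →
        iIndepFun ε μ →
        (∫ ω, (⨆ θ : {θ : Fin l → ℝ // (∑ j, |θ j|) ≤ M},
            |∑ i, ε i ω * ∑ j, X i j * θ.1 j|) ∂μ)
          ≤ K * Real.sqrt (n * Real.log (l + 1)) * M := by
  classical
  refine ⟨2, by norm_num, ?_⟩
  intro n l hn hl M hM X hX Ω mΩ μ hμ ε hmeas hdist hindep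
  haveI : Nonempty (Fin l) := Fin.pos_iff_nonempty.1 hl
  haveI : Nonempty (Fin n) := Fin.pos_iff_nonempty.1 hn
  haveI : Nonempty {θ : Fin l → ℝ // (∑ j, |θ j|) ≤ M} :=
    ⟨⟨fun _ => 0, by simp [hM.le]⟩⟩
  set S : Fin l → Ω → ℝ := fun j ω => ∑ i, ε i ω * X i j with hSdef
  have hSmeas : ∀ j, Measurable (S j) := fun j =>
    Finset.measurable_sum _ fun i _ => (hmeas i).mul_const _
  set F : Ω → ℝ := fun ω => Finset.univ.sup' Finset.univ_nonempty (fun j => |S j ω|)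
    with hFdef
  have hFmeas : Measurable F := by
    have hFeq : F = (Finset.univ.sup' Finset.univ_nonempty (fun j ω => |S j ω|)) := by
      funext ω; rw [Finset.sup'_apply]
    rw [hFeq]
    exact Finset.measurable_sup' _ fun j _ => (hSmeas j).abs
  have hFle : ∀ (ω : Ω) (j : Fin l), |S j ω| ≤ F ω := fun ω j =>
    Finset.le_sup' (fun j => |S j ω|) (Finset.mem_univ j)
  have hFnonneg : ∀ ω, 0 ≤ F ω := fun ω =>
    le_trans (abs_nonneg (S (Classical.arbitrary _) ω)) (hFle ω _)
  -- a.e. the ε's are ±1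
  have haeeps : ∀ᵐ ω ∂μ, ∀ i, ε i ω = 1 ∨ ε i ω = -1 := by
    rw [MeasureTheory.ae_all_iff]
    exact fun i => two_point_ae (ε i) (hmeas i) (hdist i).1 (hdist i).2
  -- deterministic bounds
  set C : Fin l → ℝ := fun j => ∑ i, |X i j| with hCdef
  set C₀ : ℝ := Finset.univ.sup' Finset.univ_nonempty C with hC0def
  have hSb : ∀ᵐ ω ∂μ, ∀ j, |S j ω| ≤ C j := by
    filter_upwards [haeeps] with ω hω j
    calc |S j ω| ≤ ∑ i, |ε i ω * X i j| := Finset.abs_sum_le_sum_abs _ _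
      _ = ∑ i, |X i j| := by
          refine Finset.sum_congr rfl fun i _ => ?_
          rw [abs_mul]
          rcases hω i with h | h <;> rw [h] <;> simp
  have hFb : ∀ᵐ ω ∂μ, F ω ≤ C₀ := by
    filter_upwards [hSb] with ω hω
    exact Finset.sup'_le _ _ fun j _ => (hω j).trans
      (Finset.le_sup' C (Finset.mem_univ j))
  have hFint : Integrable F μ := by
    refine Integrable.mono' (integrable_const C₀) hFmeas.aestronglyMeasurable ?_
    filter_upwards [hFb] with ω hω
    rwa [Real.norm_eq_abs, abs_of_nonneg (hFnonneg ω)]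
  -- Step 1: the sup is bounded by M * F ω
  have hθbound : ∀ (ω : Ω) (θ : {θ : Fin l → ℝ // (∑ j, |θ j|) ≤ M}),
      |∑ i, ε i ω * ∑ j, X i j * θ.1 j| ≤ M * F ω := by
    intro ω θ
    have hre : ∑ i, ε i ω * ∑ j, X i j * θ.1 j = ∑ j, θ.1 j * S j ω := by
      calc ∑ i, ε i ω * ∑ j, X i j * θ.1 j
          = ∑ i, ∑ j, ε i ω * (X i j * θ.1 j) := by simp_rw [Finset.mul_sum]
        _ = ∑ j, ∑ i, ε i ω * (X i j * θ.1 j) := Finset.sum_comm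
        _ = ∑ j, θ.1 j * S j ω := by
            refine Finset.sum_congr rfl fun j _ => ?_
            rw [hSdef, Finset.mul_sum]
            exact Finset.sum_congr rfl fun i _ => by ring
    rw [hre]
    calc |∑ j, θ.1 j * S j ω| ≤ ∑ j, |θ.1 j * S j ω| := Finset.abs_sum_le_sum_abs _ _
      _ = ∑ j, |θ.1 j| * |S j ω| := by simp_rw [abs_mul]
      _ ≤ ∑ j, |θ.1 j| * F ω := by
          refine Finset.sum_le_sum fun j _ => ?_
          exact mul_le_mul_of_nonneg_left (hFle ω j) (abs_nonneg _)
      _ = (∑ j, |θ.1 j|) * F ω := by rw [Finset.sum_mul]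
      _ ≤ M * F ω := mul_le_mul_of_nonneg_right θ.2 (hFnonneg ω)
  have hsup_le : ∀ ω, (⨆ θ : {θ : Fin l → ℝ // (∑ j, |θ j|) ≤ M},
      |∑ i, ε i ω * ∑ j, X i j * θ.1 j|) ≤ M * F ω := fun ω => ciSup_le (hθbound ω)
  have hsup_nonneg : ∀ ω, 0 ≤ (⨆ θ : {θ : Fin l → ℝ // (∑ j, |θ j|) ≤ M},
      |∑ i, ε i ω * ∑ j, X i j * θ.1 j|) := by
    intro ω
    have hbdd : BddAbove (Set.range fun θ : {θ : Fin l → ℝ // (∑ j, |θ j|) ≤ M} =>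
        |∑ i, ε i ω * ∑ j, X i j * θ.1 j|) := by
      refine ⟨M * F ω, ?_⟩
      rintro x ⟨θ, rfl⟩
      exact hθbound ω θ
    simpa using le_ciSup hbdd (⟨fun _ => 0, by simp [hM.le]⟩ :
      {θ : Fin l → ℝ // (∑ j, |θ j|) ≤ M})
  have hstep1 : (∫ ω, (⨆ θ : {θ : Fin l → ℝ // (∑ j, |θ j|) ≤ M},
      |∑ i, ε i ω * ∑ j, X i j * θ.1 j|) ∂μ) ≤ M * ∫ ω, F ω ∂μ := by
    rw [← MeasureTheory.integral_const_mul]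
    exact integral_mono_of_nonneg (Filter.Eventually.of_forall hsup_nonneg)
      (hFint.const_mul M) (Filter.Eventually.of_forall hsup_le)
  -- Step 2: the mgf bound
  have hmgf : ∀ (j : Fin l) (t : ℝ), mgf (S j) μ t ≤ Real.exp (t^2 * n / 2) := by
    intro j t
    set Y : Fin n → Ω → ℝ := fun i ω => X i j * ε i ω with hYdef
    have hYmeas : ∀ i, Measurable (Y i) := fun i => (hmeas i).const_mul _
    have hYindep : iIndepFun Y μ :=
      hindep.comp (fun i => fun x => X i j * x) (fun i => measurable_const_mul _)
    have hSY : S j = ∑ i, Y i := by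
      funext ω
      rw [hSdef]
      simp only [Finset.sum_apply, hYdef]
      exact Finset.sum_congr rfl fun i _ => mul_comm _ _
    have hmgfY : ∀ i, mgf (Y i) μ t = Real.cosh (t * X i j) := by
      intro i
      have hmgfdef : mgf (Y i) μ t = ∫ ω, Real.exp (t * Y i ω) ∂μ := rfl
      have h2p : ∫ ω, Real.exp (t * Y i ω) ∂μ
          = (Real.exp (t * (X i j * 1)) + Real.exp (t * (X i j * (-1)))) / 2 :=
        two_point_integral (ε i) (hmeas i) (hdist i).1 (hdist i).2
          (fun x => Real.exp (t * (X i j * x)))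
      rw [hmgfdef, h2p, Real.cosh_eq]
      norm_num
    rw [hSY, iIndepFun.mgf_sum hYindep hYmeas]
    calc ∏ i, mgf (Y i) μ t ≤ ∏ i, Real.exp ((t * X i j)^2 / 2) := by
          refine Finset.prod_le_prod (fun i _ => ?_) (fun i _ => ?_)
          · rw [hmgfY i]; positivity
          · rw [hmgfY i]; exact Real.cosh_le_exp_half_sq _
      _ = Real.exp (∑ i, (t * X i j)^2 / 2) := (Real.exp_sum _ _).symm
      _ = Real.exp (t^2 * n / 2) := by
          congr 1
          rw [← Finset.sum_div]
          simp_rw [mul_pow]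
          rw [← Finset.mul_sum, hX j]
  -- integrability of exp(t * S j)
  have hexpint : ∀ (j : Fin l) (t : ℝ),
      Integrable (fun ω => Real.exp (t * S j ω)) μ := by
    intro j t
    refine Integrable.mono' (integrable_const (Real.exp (|t| * C j)))
      (((hSmeas j).const_mul t).exp.aestronglyMeasurable) ?_
    filter_upwards [hSb] with ω hω
    rw [Real.norm_eq_abs, abs_of_pos (Real.exp_pos _), Real.exp_le_exp]
    calc t * S j ω ≤ |t * S j ω| := le_abs_self _
      _ = |t| * |S j ω| := abs_mul _ _
      _ ≤ |t| * C j := mul_le_mul_of_nonneg_left (hω j) (abs_nonneg t)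
  -- the key expectation bound for F
  set L : ℝ := Real.log (2 * l) with hLdef
  have hl1 : (1:ℝ) ≤ l := by exact_mod_cast hl
  have hL : 0 < L := Real.log_pos (by linarith)
  have hn0 : (0:ℝ) < n := by exact_mod_cast hn
  set t : ℝ := Real.sqrt (2 * L / n) with htdef
  have ht : 0 < t := Real.sqrt_pos.2 (by positivity)
  have ht2 : t^2 = 2 * L / n := Real.sq_sqrt (by positivity)
  -- Jensen
  have hexpFint : Integrable (fun ω => Real.exp (t * F ω)) μ := by
    refine Integrable.mono' (integrable_const (Real.exp (t * C₀)))
      ((hFmeas.const_mul t).exp.aestronglyMeasurable) ?_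
    filter_upwards [hFb] with ω hω
    rw [Real.norm_eq_abs, abs_of_pos (Real.exp_pos _), Real.exp_le_exp]
    exact mul_le_mul_of_nonneg_left hω ht.le
  have hjensen : Real.exp (t * ∫ ω, F ω ∂μ) ≤ ∫ ω, Real.exp (t * F ω) ∂μ := by
    have := convexOn_exp.map_integral_le Real.continuous_exp.continuousOn
      isClosed_univ (Filter.Eventually.of_forall fun ω => Set.mem_univ _)
      (hFint.const_mul t) ?_
    · rw [MeasureTheory.integral_const_mul] at this
      exact this
    · exact hexpFint
  -- pointwise bound on exp(t F)
  have hptwise : ∀ ω, Real.exp (t * F ω) ≤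
      ∑ j, (Real.exp (t * S j ω) + Real.exp (-t * S j ω)) := by
    intro ω
    obtain ⟨j₀, -, hj₀⟩ := Finset.exists_mem_eq_sup' (Finset.univ_nonempty)
      (fun j => |S j ω|)
    have h1 : Real.exp (t * F ω) ≤ Real.exp (t * S j₀ ω) + Real.exp (-t * S j₀ ω) := by
      have hFω : F ω = |S j₀ ω| := hj₀
      rw [hFω]
      rcases abs_cases (S j₀ ω) with ⟨h, -⟩ | ⟨h, -⟩
      · rw [h]
        exact le_add_of_nonneg_right (Real.exp_pos _).le
      · rw [h, show t * -S j₀ ω = -t * S j₀ ω by ring]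
        exact le_add_of_nonneg_left (Real.exp_pos _).le
    refine h1.trans (Finset.single_le_sum (f := fun j => Real.exp (t * S j ω)
      + Real.exp (-t * S j ω)) (fun j _ => by positivity) (Finset.mem_univ j₀))
  -- combine
  have hEF : t * ∫ ω, F ω ∂μ ≤ L + t^2 * n / 2 := by
    rw [← Real.exp_le_exp, Real.exp_add, hLdef, Real.exp_log (by positivity)]
    calc Real.exp (t * ∫ ω, F ω ∂μ) ≤ ∫ ω, Real.exp (t * F ω) ∂μ := hjensen
      _ ≤ ∫ ω, ∑ j, (Real.exp (t * S j ω) + Real.exp (-t * S j ω)) ∂μ := by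
          refine integral_mono_of_nonneg
            (Filter.Eventually.of_forall fun ω => (Real.exp_pos _).le)
            (integrable_finset_sum _ fun j _ => ((hexpint j t).add
              (by simpa using hexpint j (-t)))) (Filter.Eventually.of_forall hptwise)
      _ = ∑ j, ((mgf (S j) μ t) + (mgf (S j) μ (-t))) := by
          rw [integral_finset_sum (f := fun j ω => Real.exp (t * S j ω)
            + Real.exp (-t * S j ω)) _ fun j _ => ((hexpint j t).add
            (by simpa using hexpint j (-t)))]
          refine Finset.sum_congr rfl fun j _ => ?_
          rw [integral_add (hexpint j t) (by simpa using hexpint j (-t))]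
          rfl
      _ ≤ ∑ j : Fin l, 2 * Real.exp (t^2 * n / 2) := by
          refine Finset.sum_le_sum fun j _ => ?_
          have h1 := hmgf j t
          have h2 := hmgf j (-t)
          rw [neg_sq] at h2
          linarith
      _ = 2 * l * Real.exp (t^2 * n / 2) := by
          rw [Finset.sum_const, Finset.card_univ, Fintype.card_fin]
          ring
  -- final arithmetic
  have hn' : (n:ℝ) ≠ 0 := ne_of_gt hn0
  have hEF2 : t * ∫ ω, F ω ∂μ ≤ 2 * L := by
    rw [ht2] at hEF
    have : 2 * L / ↑n * ↑n / 2 = L := by field_simp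
    linarith [hEF, this.le, this.ge]
  have hkey : t * Real.sqrt (2 * L * n) = 2 * L := by
    rw [htdef, ← Real.sqrt_mul (by positivity),
      show 2 * L / ↑n * (2 * L * ↑n) = (2 * L)^2 by field_simp]
    exact Real.sqrt_sq (by positivity)
  have hIF : ∫ ω, F ω ∂μ ≤ Real.sqrt (2 * L * n) := by
    refine (mul_le_mul_iff_right₀ ht).1 ?_
    rw [hkey]
    exact hEF2
  have hLle : L ≤ 2 * Real.log (l + 1) := by
    have hll : (0:ℝ) < l := by linarith
    rw [hLdef, Real.log_mul two_ne_zero (ne_of_gt hll)]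
    have h1 : Real.log 2 ≤ Real.log (l + 1) := by
      gcongr <;> linarith
    have h2 : Real.log l ≤ Real.log (l + 1) := by
      gcongr <;> linarith
    linarith
  have hlog0 : 0 ≤ Real.log (l + 1) := Real.log_nonneg (by linarith)
  have hsq : Real.sqrt (2 * L * n) ≤ 2 * Real.sqrt (↑n * Real.log (l + 1)) := by
    have h4 : Real.sqrt (4 * (↑n * Real.log (l + 1)))
        = 2 * Real.sqrt (↑n * Real.log (l + 1)) := by
      rw [show (4:ℝ) = 2^2 by norm_num, Real.sqrt_mul (by positivity),
        Real.sqrt_sq (by norm_num)]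
    rw [← h4]
    refine Real.sqrt_le_sqrt ?_
    nlinarith
  calc (∫ ω, (⨆ θ : {θ : Fin l → ℝ // (∑ j, |θ j|) ≤ M},
      |∑ i, ε i ω * ∑ j, X i j * θ.1 j|) ∂μ) ≤ M * ∫ ω, F ω ∂μ := hstep1
    _ ≤ M * (2 * Real.sqrt (↑n * Real.log (↑l + 1))) :=
        mul_le_mul_of_nonneg_left (hIF.trans hsq) hM.le
    _ = 2 * Real.sqrt (↑n * Real.log (↑l + 1)) * M := by ring
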